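/- Let f satisfy approximate sharpness with constants α, β, η, and let Γ be an optimization algorithm such that d(x0, X̂) ≤ δ implies f(Γ(δ,ε,x0)) - f̂ + g_Q(Γ(δ,ε,x0)) ≤ ε. Define iterates by ε_{k+1} = r ε_k, δ_{k+1} = (2ε_k/α)^{1/β}, z = Γ(δ_{k+1}, ε_{k+1}, x_k), and x_{k+1} = argmin{f(x)+g_Q(x) : x ∈ {x_k, z}}, starting from x0 with f(x0) - f̂ + g_Q(x0) ≤ ε0. Then for every k with ε_k ≥ η, one has f(x_k) - f̂ + g_Q(x_k) ≤ ε_k and d(x_k, X̂) ≤ (2ε_k/α)^{1/β}. -/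
import Mathlib


/-- Restart scheme with known `α`, `β` (Algorithm 1): under approximate sharpness with constants
`α, β, η`, the iterates `x_k` satisfy `f x_k - f̂ + g_Q x_k ≤ ε_k` and
`d(x_k, X̂) ≤ (2 ε_k / α) ^ (1/β)` for every `k` with `ε_k = r^k ε₀ ≥ η`. -/
theorem restart_scheme_known_consts_iterates {E : Type*} [MetricSpace E]
    (D Xhat : Set E) (f gQ : E → ℝ) (fhat α β η r ε0 : ℝ)
    (Γ : ℝ → ℝ → E → E) (x : ℕ → E)
    (hα : 0 < α) (hβ : 1 ≤ β) (hη : 0 ≤ η) (hr0 : 0 < r) (hr1 : r < 1) (hε0 : 0 < ε0)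
    (hsharp : ∀ y ∈ D, 0 ≤ f y - fhat + gQ y + η ∧
      Metric.infDist y Xhat ≤ ((f y - fhat + gQ y + η) / α) ^ (1 / β))
    (hΓ : ∀ δ ε : ℝ, 0 < δ → 0 < ε → ∀ x0 ∈ D, Γ δ ε x0 ∈ D ∧
      (Metric.infDist x0 Xhat ≤ δ → f (Γ δ ε x0) - fhat + gQ (Γ δ ε x0) ≤ ε))
    (hx0 : x 0 ∈ D) (hinit : f (x 0) - fhat + gQ (x 0) ≤ ε0)
    (hstep : ∀ k : ℕ,
      (x (k + 1) = x k ∨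
        x (k + 1) = Γ ((2 * (r ^ k * ε0) / α) ^ (1 / β)) (r ^ (k + 1) * ε0) (x k)) ∧
      f (x (k + 1)) + gQ (x (k + 1)) =
        min (f (x k) + gQ (x k))
          (f (Γ ((2 * (r ^ k * ε0) / α) ^ (1 / β)) (r ^ (k + 1) * ε0) (x k)) +
            gQ (Γ ((2 * (r ^ k * ε0) / α) ^ (1 / β)) (r ^ (k + 1) * ε0) (x k)))) :
    ∀ k : ℕ, η ≤ r ^ k * ε0 →
      f (x k) - fhat + gQ (x k) ≤ r ^ k * ε0 ∧
      Metric.infDist (x k) Xhat ≤ (2 * (r ^ k * ε0) / α) ^ (1 / β) := by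
  have hεpos : ∀ k : ℕ, 0 < r ^ k * ε0 := fun k => mul_pos (pow_pos hr0 k) hε0
  have hδpos : ∀ k : ℕ, 0 < (2 * (r ^ k * ε0) / α) ^ (1 / β) := by
    intro k
    exact Real.rpow_pos_of_pos (by have := hεpos k; positivity) _
  have hD : ∀ k, x k ∈ D := by
    intro k
    induction k with
    | zero => exact hx0
    | succ k ih =>
      rcases (hstep k).1 with h | h
      · rw [h]; exact ih
      · rw [h]; exact (hΓ _ _ (hδpos k) (hεpos (k + 1)) _ ih).1
  have hdist : ∀ k, η ≤ r ^ k * ε0 → f (x k) - fhat + gQ (x k) ≤ r ^ k * ε0 →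
      Metric.infDist (x k) Xhat ≤ (2 * (r ^ k * ε0) / α) ^ (1 / β) := by
    intro k hη' hf
    obtain ⟨hnn, hs⟩ := hsharp (x k) (hD k)
    refine hs.trans (Real.rpow_le_rpow (by positivity) ?_ (by positivity))
    gcongr
    linarith
  have hdec : ∀ k : ℕ, r ^ (k + 1) * ε0 ≤ r ^ k * ε0 := by
    intro k
    exact mul_le_mul_of_nonneg_right
      (pow_le_pow_of_le_one hr0.le hr1.le (Nat.le_succ k)) hε0.le
  intro k
  induction k with
  | zero =>
    intro hη'
    constructor
    · simpa using hinit
    · exact hdist 0 hη' (by simpa using hinit)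
  | succ k ih =>
    intro hη'
    have hηk : η ≤ r ^ k * ε0 := hη'.trans (hdec k)
    obtain ⟨hfk, hdk⟩ := ih hηk
    have hz := (hΓ _ _ (hδpos k) (hεpos (k + 1)) _ (hD k)).2 hdk
    have hmin := (hstep k).2
    have h1 : f (x (k + 1)) - fhat + gQ (x (k + 1)) ≤ r ^ (k + 1) * ε0 := by
      have := min_le_right (f (x k) + gQ (x k))
        (f (Γ ((2 * (r ^ k * ε0) / α) ^ (1 / β)) (r ^ (k + 1) * ε0) (x k)) +
          gQ (Γ ((2 * (r ^ k * ε0) / α) ^ (1 / β)) (r ^ (k + 1) * ε0) (x k)))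
      linarith [hmin ▸ this]
    exact ⟨h1, hdist (k + 1) hη' h1⟩
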